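/- Let r ≥ 1 and n ≥ 0 be integers and let (V,B₁,B₂,B₃,I,J) be a cyclic framed representation of the quiver with potential (𝒬,𝒲) of type (r,n) over a field K. Suppose ε₁, ε₂, ε₃ are endomorphisms of V and η : K^r → V, δ : V → K^r are K-linear maps satisfying the linearized relations [ε₃,B₁] + [B₃,ε₁] = 0, [ε₃,B₂] + [B₃,ε₂] = 0, [ε₁,B₂] + [B₁,ε₂] + I∘δ + η∘J = 0, B₃∘η + ε₃∘I − η∘A_r = 0 and δ∘B₃ + J∘ε₃ − A_r∘δ = 0. If there exists an endomorphism ψ of V with ε₁ = [ψ,B₁], ε₂ = [ψ,B₂], η = ψ∘I and δ = J∘ψ, then ε₃ = [ψ,B₃]. -/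

import Mathlib

open LinearMap

/-- The regular nilpotent endomorphism `A_r` of `R^r`, sending the standard basis vector
`e_a` to `e_{a+1}` (and the last one to `0`). -/
noncomputable def Ar (R : Type*) [CommRing R] (r : ℕ) : (Fin r → R) →ₗ[R] (Fin r → R) where
  toFun v i := if h : (i : ℕ) = 0 then 0
    else v ⟨(i : ℕ) - 1, lt_of_le_of_lt (Nat.sub_le _ _) i.isLt⟩
  map_add' u v := by funext i; by_cases h : (i : ℕ) = 0 <;> simp [h]
  map_smul' c v := by funext i; by_cases h : (i : ℕ) = 0 <;> simp [h]

/-- Auxiliary commutator identity in a ring. -/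
lemma comm_aux {R : Type*} [Ring R] {e B B₃ ψ : R}
    (hl : (e*B - B*e) + (B₃*(ψ*B - B*ψ) - (ψ*B - B*ψ)*B₃) = 0)
    (hc : B₃*B = B*B₃) :
    (e - (ψ*B₃ - B₃*ψ)) * B = B * (e - (ψ*B₃ - B₃*ψ)) := by
  have expand : (e - (ψ*B₃ - B₃*ψ))*B - B*(e - (ψ*B₃ - B₃*ψ)) =
      ((e*B - B*e) + (B₃*(ψ*B - B*ψ) - (ψ*B - B*ψ)*B₃))
      + (ψ*(B*B₃ - B₃*B) + (B₃*B - B*B₃)*ψ) := by noncomm_ring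
  rw [hl, hc] at expand
  simp only [sub_self, mul_zero, zero_mul, add_zero, zero_add] at expand
  exact sub_eq_zero.mp expand

/-- Let `(V, B₁, B₂, B₃, I, J)` be a cyclic framed representation of the quiver
with potential `(𝒬, 𝒲)` of type `(r, n)` over a field `K`. If `(ε₁, ε₂, ε₃, η, δ)` satisfies the
linearized relations and `(ε₁, ε₂, η, δ)` is in the image of the linearization of the gauge group
action, i.e. `ε₁ = [ψ, B₁]`, `ε₂ = [ψ, B₂]`, `η = ψ ∘ I`, `δ = J ∘ ψ` for some endomorphism `ψ`
of `V`, then `ε₃ = [ψ, B₃]`. -/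
theorem stmt4 (r n : ℕ) (hr : 1 ≤ r) (K : Type*) [Field K]
    (V : Type*) [AddCommGroup V] [Module K V] [FiniteDimensional K V]
    (hdim : Module.finrank K V = n)
    (B₁ B₂ B₃ : V →ₗ[K] V) (I : (Fin r → K) →ₗ[K] V) (J : V →ₗ[K] (Fin r → K))
    (hADHM : B₁ ∘ₗ B₂ - B₂ ∘ₗ B₁ + I ∘ₗ J = 0)
    (hJ3 : J ∘ₗ B₃ = Ar K r ∘ₗ J)
    (h3I : B₃ ∘ₗ I = I ∘ₗ Ar K r)
    (h31 : B₃ ∘ₗ B₁ = B₁ ∘ₗ B₃)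
    (h32 : B₃ ∘ₗ B₂ = B₂ ∘ₗ B₃)
    (hcyclic : ∀ W : Submodule K V,
        (∀ v ∈ W, B₁ v ∈ W) → (∀ v ∈ W, B₂ v ∈ W) → (∀ v ∈ W, B₃ v ∈ W) →
        (∀ x, I x ∈ W) → W = ⊤)
    (ε₁ ε₂ ε₃ : V →ₗ[K] V) (η : (Fin r → K) →ₗ[K] V) (δ : V →ₗ[K] (Fin r → K))
    (hl1 : (ε₃ ∘ₗ B₁ - B₁ ∘ₗ ε₃) + (B₃ ∘ₗ ε₁ - ε₁ ∘ₗ B₃) = 0)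
    (hl2 : (ε₃ ∘ₗ B₂ - B₂ ∘ₗ ε₃) + (B₃ ∘ₗ ε₂ - ε₂ ∘ₗ B₃) = 0)
    (hl3 : (ε₁ ∘ₗ B₂ - B₂ ∘ₗ ε₁) + (B₁ ∘ₗ ε₂ - ε₂ ∘ₗ B₁) + I ∘ₗ δ + η ∘ₗ J = 0)
    (hl4 : B₃ ∘ₗ η + ε₃ ∘ₗ I - η ∘ₗ Ar K r = 0)
    (hl5 : δ ∘ₗ B₃ + J ∘ₗ ε₃ - Ar K r ∘ₗ δ = 0)
    (ψ : V →ₗ[K] V)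
    (hψ1 : ε₁ = ψ ∘ₗ B₁ - B₁ ∘ₗ ψ)
    (hψ2 : ε₂ = ψ ∘ₗ B₂ - B₂ ∘ₗ ψ)
    (hψη : η = ψ ∘ₗ I)
    (hψδ : δ = J ∘ₗ ψ) :
    ε₃ = ψ ∘ₗ B₃ - B₃ ∘ₗ ψ := by
  classical
  set φ : Module.End K V := ε₃ - (ψ * B₃ - B₃ * ψ) with hφdef
  -- φ commutes with B₁ and B₂
  have hc1 : φ * B₁ = B₁ * φ := comm_aux (by rw [hψ1] at hl1; exact hl1) h31
  have hc2 : φ * B₂ = B₂ * φ := comm_aux (by rw [hψ2] at hl2; exact hl2) h32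
  -- φ ∘ I = 0
  have hφI : φ ∘ₗ I = 0 := by
    rw [hψη] at hl4
    have key : (ψ ∘ₗ I) ∘ₗ Ar K r = (ψ ∘ₗ B₃) ∘ₗ I := by
      rw [LinearMap.comp_assoc, ← h3I, ← LinearMap.comp_assoc]
    rw [key] at hl4
    refine LinearMap.ext fun x => ?_
    have h4 := LinearMap.ext_iff.mp hl4 x
    simp only [LinearMap.add_apply, LinearMap.sub_apply, LinearMap.comp_apply,
      LinearMap.zero_apply] at h4
    simp only [LinearMap.comp_apply, LinearMap.zero_apply, hφdef, LinearMap.sub_apply,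
      Module.End.mul_apply]
    rw [← h4]; abel
  -- the algebra generated by B₁ and B₂
  set S := Algebra.adjoin K ({B₁, B₂} : Set (Module.End K V)) with hS
  have commOf : ∀ (g : Module.End K V), g * B₁ = B₁ * g → g * B₂ = B₂ * g →
      ∀ f ∈ S, Commute g f := by
    intro g hg1 hg2 f hf
    refine Algebra.adjoin_induction (fun x hx => ?_) (fun c => ?_)
      (fun x y _ _ hx hy => hx.add_right hy)
      (fun x y _ _ hx hy => hx.mul_right hy) hf
    · rcases hx with rfl | hx
      · exact hg1
      · rw [Set.mem_singleton_iff] at hx; subst hx; exact hg2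
    · exact (Algebra.commutes c g).symm
  have hB31 : B₃ * B₁ = B₁ * B₃ := h31
  have hB32 : B₃ * B₂ = B₂ * B₃ := h32
  -- the cyclic submodule
  set U : Submodule K V := ⨆ f : S, LinearMap.range ((f : Module.End K V) ∘ₗ I) with hU
  have hImem : ∀ x, I x ∈ U := by
    intro x
    exact Submodule.mem_iSup_of_mem ⟨1, one_mem S⟩ ⟨x, by simp⟩
  have hSmem : ∀ (g : Module.End K V), g ∈ S → ∀ v ∈ U, g v ∈ U := by
    intro g hg v hv
    refine Submodule.iSup_induction (motive := fun w => g w ∈ U) _ hv (fun f x hx => ?_)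
      (by simp) (fun x y hx hy => by simp only [map_add]; exact U.add_mem hx hy)
    obtain ⟨y, rfl⟩ := hx
    refine Submodule.mem_iSup_of_mem ⟨g * f.1, S.mul_mem hg f.2⟩ ⟨y, ?_⟩
    simp [Module.End.mul_apply]
  have hB3mem : ∀ v ∈ U, B₃ v ∈ U := by
    intro v hv
    refine Submodule.iSup_induction (motive := fun w => B₃ w ∈ U) _ hv (fun f x hx => ?_)
      (by simp) (fun x y hx hy => by simp only [map_add]; exact U.add_mem hx hy)
    obtain ⟨y, rfl⟩ := hx
    have hcomm : B₃ * f.1 = f.1 * B₃ := commOf B₃ hB31 hB32 f.1 f.2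
    have h3Iy : B₃ (I y) = I (Ar K r y) := LinearMap.ext_iff.mp h3I y
    refine Submodule.mem_iSup_of_mem f ⟨Ar K r y, ?_⟩
    calc (f.1 ∘ₗ I) (Ar K r y) = f.1 (I (Ar K r y)) := rfl
      _ = f.1 (B₃ (I y)) := by rw [h3Iy]
      _ = (f.1 * B₃) (I y) := rfl
      _ = (B₃ * f.1) (I y) := by rw [hcomm]
      _ = B₃ ((f.1 ∘ₗ I) y) := rfl
  have hB1S : B₁ ∈ S := Algebra.subset_adjoin (by simp)
  have hB2S : B₂ ∈ S := Algebra.subset_adjoin (by simp)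
  have hUtop : U = ⊤ := hcyclic U (fun v hv => hSmem B₁ hB1S v hv)
    (fun v hv => hSmem B₂ hB2S v hv) hB3mem hImem
  have hφ0 : φ = 0 := by
    ext v
    have hv : v ∈ U := hUtop ▸ Submodule.mem_top
    simp only [LinearMap.zero_apply]
    refine Submodule.iSup_induction (motive := fun w => φ w = 0) _ hv (fun f x hx => ?_)
      (map_zero φ) (fun x y hx hy => by simp only [map_add]; rw [hx, hy, add_zero])
    obtain ⟨y, rfl⟩ := hx
    have hcomm : φ * f.1 = f.1 * φ := commOf φ hc1 hc2 f.1 f.2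
    have hIy : φ (I y) = 0 := LinearMap.ext_iff.mp hφI y
    calc φ ((f.1 ∘ₗ I) y) = (φ * f.1) (I y) := rfl
      _ = (f.1 * φ) (I y) := by rw [hcomm]
      _ = f.1 (φ (I y)) := rfl
      _ = 0 := by rw [hIy, map_zero]
  have := sub_eq_zero.mp hφ0
  exact this
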